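/- Let a, b ∈ ℂ and c, d ∈ ℂ ∖ ℤ_{≤0}. Then for every z ∈ ℂ, ₂F₂[a, b; c, d; z] = Σ_{k=0}^∞ ((a)_k (d−b)_k)/((c)_k (d)_k) · (−z)^k/k! · ₁F₁[a+k; c+k; z], where the series on the right converges. -/

import Mathlib

open Finset


/-- The Pochhammer symbol `(a)_n = a (a+1) ⋯ (a+n-1)`. -/
noncomputable def poch (a : ℂ) (n : ℕ) : ℂ := ∏ i ∈ Finset.range n, (a + i)

/-- The confluent hypergeometric function `₁F₁[a; b; z]`. -/
noncomputable def F11 (a b z : ℂ) : ℂ :=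
  ∑' n : ℕ, poch a n / poch b n * z ^ n / Nat.factorial n

/-- The generalized hypergeometric function `₂F₂[a₁, a₂; b₁, b₂; z]`. -/
noncomputable def F22 (a1 a2 b1 b2 z : ℂ) : ℂ :=
  ∑' n : ℕ, poch a1 n * poch a2 n / (poch b1 n * poch b2 n) * z ^ n / Nat.factorial n

noncomputable def Complex.abs : AbsoluteValue ℂ ℝ := NormedField.toAbsoluteValue ℂ

lemma Complex.abs_natCast (n : ℕ) : Complex.abs (n : ℂ) = (n : ℝ) := by
  show ‖(n : ℂ)‖ = (n : ℝ)
  simp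

lemma Complex.norm_eq_abs (x : ℂ) : ‖x‖ = Complex.abs x := rfl

lemma poch_zero (a : ℂ) : poch a 0 = 1 := by simp [poch]

lemma poch_succ (a : ℂ) (n : ℕ) : poch a (n+1) = poch a n * (a + n) := by
  simp [poch, Finset.prod_range_succ]

lemma poch_succ' (a : ℂ) (n : ℕ) : poch a (n+1) = a * poch (a+1) n := by
  rw [poch, Finset.prod_range_succ', poch]
  simp only [Nat.cast_zero, add_zero, mul_comm]
  congr 1
  refine Finset.prod_congr rfl fun i _ => ?_
  push_cast; ring

lemma poch_add (a : ℂ) (k n : ℕ) : poch a (k+n) = poch a k * poch (a+k) n := by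
  induction n with
  | zero => simp [poch_zero]
  | succ n ih =>
    rw [← Nat.add_assoc, poch_succ, ih, poch_succ, mul_assoc]
    push_cast; ring_nf

lemma poch_ne_zero {c : ℂ} (hc : ∀ m : ℕ, c ≠ -(m : ℂ)) (n : ℕ) : poch c n ≠ 0 := by
  rw [poch]
  refine Finset.prod_ne_zero_iff.mpr fun i _ => ?_
  intro h
  exact hc i (by linear_combination h)
lemma chu (N : ℕ) : ∀ x y : ℂ,
    ∑ k ∈ range (N+1), (-1:ℂ)^k * (N.choose k : ℂ) * poch x k * poch (y+k) (N-k)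
      = poch (y-x) N := by
  induction N with
  | zero => intro x y; simp [poch_zero]
  | succ N ih =>
    intro x y
    have hU : ∀ j ∈ range (N+1),
        (-1:ℂ)^j * (N.choose j : ℂ) * poch x j * poch (y+j) (N+1-j)
        = (-1:ℂ)^j * (N.choose j : ℂ) * poch x j * ((y+j) * poch (y+1+j) (N-j)) := by
      intro j hj
      rw [mem_range] at hj
      have : N + 1 - j = (N - j) + 1 := by omega
      rw [this, poch_succ']
      ring_nf
    have hT : ∀ k ∈ range (N+1),
        (-1:ℂ)^(k+1) * ((N+1).choose (k+1) : ℂ) * poch x (k+1) * poch (y+(k+1 : ℕ)) (N+1-(k+1))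
        = (-1:ℂ)^(k+1) * (N.choose (k+1) : ℂ) * poch x (k+1) * poch (y+(k+1 : ℕ)) (N-k)
          - (-1:ℂ)^k * (N.choose k : ℂ) * poch x k * ((x+k) * poch (y+1+k) (N-k)) := by
      intro k hk
      have hc : ((N+1).choose (k+1) : ℂ) = (N.choose (k+1) : ℂ) + (N.choose k : ℂ) := by
        rw [Nat.choose_succ_succ]; push_cast; ring
      have h2 : poch x (k+1) = poch x k * (x + k) := poch_succ x k
      have h3 : poch (y+(k+1:ℕ)) (N-k) = poch (y+1+k) (N-k) := by
        push_cast; ring_nf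
      have h4 : N + 1 - (k+1) = N - k := by omega
      rw [hc, h4, h3, h2]
      ring
    calc ∑ k ∈ range (N+1+1), (-1:ℂ)^k * ((N+1).choose k : ℂ) * poch x k * poch (y+k) (N+1-k)
        = (∑ k ∈ range (N+1), (-1:ℂ)^(k+1) * ((N+1).choose (k+1) : ℂ) * poch x (k+1) *
            poch (y+(k+1:ℕ)) (N+1-(k+1)))
          + (-1:ℂ)^0 * ((N+1).choose 0 : ℂ) * poch x 0 * poch (y+(0:ℕ)) (N+1-0) := by
          rw [Finset.sum_range_succ']
      _ = (∑ k ∈ range (N+1),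
            ((-1:ℂ)^(k+1) * (N.choose (k+1) : ℂ) * poch x (k+1) * poch (y+(k+1 : ℕ)) (N-k)
            - (-1:ℂ)^k * (N.choose k : ℂ) * poch x k * ((x+k) * poch (y+1+k) (N-k))))
          + (-1:ℂ)^0 * ((N+1).choose 0 : ℂ) * poch x 0 * poch (y+(0:ℕ)) (N+1-0) := by
          rw [Finset.sum_congr rfl hT]
      _ = (∑ k ∈ range (N+1+1), (-1:ℂ)^k * (N.choose k : ℂ) * poch x k * poch (y+k) (N+1-k))
          - ∑ k ∈ range (N+1), (-1:ℂ)^k * (N.choose k : ℂ) * poch x k * ((x+k) * poch (y+1+k) (N-k)) := by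
          rw [Finset.sum_sub_distrib, Finset.sum_range_succ' (fun k =>
            (-1:ℂ)^k * (N.choose k : ℂ) * poch x k * poch (y+k) (N+1-k)) (N+1)]
          have h5 : ∀ k ∈ range (N+1),
              (-1:ℂ)^(k+1) * (N.choose (k+1) : ℂ) * poch x (k+1) * poch (y+(k+1:ℕ)) (N-k)
              = (-1:ℂ)^(k+1) * (N.choose (k+1) : ℂ) * poch x (k+1) * poch (y+(k+1:ℕ)) (N+1-(k+1)) := by
            intro k hk
            congr 2
            omega
          rw [Finset.sum_congr rfl h5]
          simp only [Nat.choose_zero_right, Nat.cast_one]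
          ring
      _ = (∑ k ∈ range (N+1), (-1:ℂ)^k * (N.choose k : ℂ) * poch x k * poch (y+k) (N+1-k))
          - ∑ k ∈ range (N+1), (-1:ℂ)^k * (N.choose k : ℂ) * poch x k * ((x+k) * poch (y+1+k) (N-k)) := by
          rw [Finset.sum_range_succ]
          simp [Nat.choose_succ_self]
      _ = ∑ k ∈ range (N+1), (-1:ℂ)^k * (N.choose k : ℂ) * poch x k * ((y+k) * poch (y+1+k) (N-k))
          - ∑ k ∈ range (N+1), (-1:ℂ)^k * (N.choose k : ℂ) * poch x k * ((x+k) * poch (y+1+k) (N-k)) := by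
          rw [Finset.sum_congr rfl hU]
      _ = (y - x) * ∑ k ∈ range (N+1), (-1:ℂ)^k * (N.choose k : ℂ) * poch x k * poch (y+1+k) (N-k) := by
          rw [← Finset.sum_sub_distrib, Finset.mul_sum]
          refine Finset.sum_congr rfl fun k _ => ?_
          ring
      _ = poch (y-x) (N+1) := by
          rw [ih x (y+1)]
          rw [poch_succ']
          ring_nf
lemma poch_ratio_bound (a c : ℂ) (hc : ∀ m : ℕ, c ≠ -(m : ℂ)) :
    ∃ C : ℝ, 0 ≤ C ∧ ∀ N : ℕ, Complex.abs (poch a N) ≤ C * 2^N * Complex.abs (poch c N) := by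
  obtain ⟨N0, hN0⟩ : ∃ N0 : ℕ, ∀ m : ℕ, N0 ≤ m → Complex.abs (a + m) ≤ 2 * Complex.abs (c + m) := by
    refine ⟨⌈Complex.abs (a - c) + Complex.abs c⌉₊, fun m hm => ?_⟩
    have hm' : Complex.abs (a - c) + Complex.abs c ≤ (m : ℝ) :=
      le_trans (Nat.le_ceil _) (by exact_mod_cast hm)
    have htri : Complex.abs ((m : ℂ)) ≤ Complex.abs (c + m) + Complex.abs c := by
      calc Complex.abs ((m : ℂ)) = Complex.abs ((c + m) + (-c)) := by ring_nf
        _ ≤ Complex.abs (c + m) + Complex.abs (-c) := Complex.abs.add_le _ _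
        _ = Complex.abs (c + m) + Complex.abs c := by rw [AbsoluteValue.map_neg]
    rw [Complex.abs_natCast] at htri
    have h1 : Complex.abs (a - c) ≤ Complex.abs (c + m) := by linarith
    calc Complex.abs (a + m) = Complex.abs ((a - c) + (c + m)) := by ring_nf
      _ ≤ Complex.abs (a - c) + Complex.abs (c + m) := Complex.abs.add_le _ _
      _ ≤ 2 * Complex.abs (c + m) := by linarith
  have hcpos : ∀ n : ℕ, 0 < Complex.abs (poch c n) := fun n =>
    AbsoluteValue.pos _ (poch_ne_zero hc n)
  set K : ℝ := Complex.abs (poch a N0) / Complex.abs (poch c N0) with hK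
  have hKnn : 0 ≤ K := div_nonneg (AbsoluteValue.nonneg _ _) (AbsoluteValue.nonneg _ _)
  have step : ∀ m : ℕ, Complex.abs (poch a (N0+m)) ≤ K * 2^m * Complex.abs (poch c (N0+m)) := by
    intro m
    induction m with
    | zero =>
      simp only [Nat.add_zero, pow_zero, mul_one, hK]
      rw [div_mul_cancel₀]
      exact (hcpos N0).ne'
    | succ m ih =>
      rw [← Nat.add_assoc, poch_succ, poch_succ, map_mul, map_mul]
      calc Complex.abs (poch a (N0+m)) * Complex.abs (a + (N0+m : ℕ))
          ≤ (K * 2^m * Complex.abs (poch c (N0+m))) * (2 * Complex.abs (c + (N0+m : ℕ))) := by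
            apply mul_le_mul ih (hN0 _ (Nat.le_add_right _ _)) (AbsoluteValue.nonneg _ _)
            positivity
        _ = K * 2^(m+1) * (Complex.abs (poch c (N0+m)) * Complex.abs (c + (N0+m : ℕ))) := by ring
  set C : ℝ := ∑ n ∈ range (N0+1), Complex.abs (poch a n) / Complex.abs (poch c n) with hC
  have hCnn : 0 ≤ C := Finset.sum_nonneg fun n _ =>
    div_nonneg (AbsoluteValue.nonneg _ _) (AbsoluteValue.nonneg _ _)
  have hterm : ∀ n ∈ range (N0+1), Complex.abs (poch a n) / Complex.abs (poch c n) ≤ C := by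
    intro n hn
    rw [hC]
    exact Finset.single_le_sum
      (f := fun i => Complex.abs (poch a i) / Complex.abs (poch c i))
      (fun i _ => div_nonneg (AbsoluteValue.nonneg _ _) (AbsoluteValue.nonneg _ _)) hn
  refine ⟨C, hCnn, fun N => ?_⟩
  rcases le_or_gt N0 N with h | h
  · obtain ⟨m, rfl⟩ := Nat.exists_eq_add_of_le h
    calc Complex.abs (poch a (N0+m)) ≤ K * 2^m * Complex.abs (poch c (N0+m)) := step m
      _ ≤ C * 2^(N0+m) * Complex.abs (poch c (N0+m)) := by
          apply mul_le_mul_of_nonneg_right _ (AbsoluteValue.nonneg _ _)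
          apply mul_le_mul (hterm N0 (by simp)) _ (by positivity) hCnn
          exact pow_le_pow_right₀ one_le_two (Nat.le_add_left _ _)
  · have h1 : Complex.abs (poch a N) / Complex.abs (poch c N) ≤ C :=
      hterm N (mem_range.mpr (by omega))
    rw [div_le_iff₀ (hcpos N)] at h1
    calc Complex.abs (poch a N) ≤ C * Complex.abs (poch c N) := h1
      _ ≤ C * 2^N * Complex.abs (poch c N) := by
          apply mul_le_mul_of_nonneg_right _ (AbsoluteValue.nonneg _ _)
          nlinarith [one_le_pow₀ (one_le_two (α := ℝ)) (n := N)]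

lemma chu_div (b d : ℂ) (hd : ∀ m : ℕ, d ≠ -(m : ℂ)) (N : ℕ) :
    ∑ k ∈ range (N+1), (-1:ℂ)^k * poch (d-b) k /
        (poch d k * (Nat.factorial k : ℂ) * (Nat.factorial (N-k) : ℂ))
      = poch b N / (poch d N * (Nat.factorial N : ℂ)) := by
  have hterm : ∀ k ∈ range (N+1),
      (-1:ℂ)^k * poch (d-b) k / (poch d k * (Nat.factorial k : ℂ) * (Nat.factorial (N-k) : ℂ))
      = ((-1:ℂ)^k * (N.choose k : ℂ) * poch (d-b) k * poch (d+k) (N-k)) /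
          (poch d N * (Nat.factorial N : ℂ)) := by
    intro k hk
    rw [mem_range] at hk
    have hkN : k ≤ N := by omega
    have hdk : poch d k ≠ 0 := poch_ne_zero hd k
    have hdk2 : poch (d+k) (N-k) ≠ 0 := by
      apply poch_ne_zero
      intro m h
      apply hd (m+k)
      push_cast
      linear_combination h
    have hdN : poch d N = poch d k * poch (d+k) (N-k) := by
      rw [← poch_add]
      congr 1
      omega
    have hNf : (Nat.factorial N : ℂ)
        = (N.choose k : ℂ) * (Nat.factorial k : ℂ) * (Nat.factorial (N-k) : ℂ) := by
      exact_mod_cast congrArg (Nat.cast : ℕ → ℂ)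
        (Nat.choose_mul_factorial_mul_factorial hkN).symm
    have hkf : (Nat.factorial k : ℂ) ≠ 0 := by
      exact_mod_cast (Nat.factorial_pos k).ne'
    have hNkf : (Nat.factorial (N-k) : ℂ) ≠ 0 := by
      exact_mod_cast (Nat.factorial_pos (N-k)).ne'
    have hch : (N.choose k : ℂ) ≠ 0 := by
      exact_mod_cast (Nat.choose_pos hkN).ne'
    rw [hdN, hNf]
    field_simp
  rw [Finset.sum_congr rfl hterm, ← Finset.sum_div, chu N (d-b) d,
    show d - (d-b) = b by ring]

set_option maxHeartbeats 1000000 in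
/-- Luke-type expansion (4.4) of the paper:
`₂F₂[a,b;c,d;z] = Σ_k (a)_k (d−b)_k / ((c)_k (d)_k) (−z)^k/k! ₁F₁[a+k; c+k; z]`. -/
theorem F22_Luke_expansion (a b c d : ℂ)
    (hc : ∀ m : ℕ, c ≠ -(m : ℂ)) (hd : ∀ m : ℕ, d ≠ -(m : ℂ)) (z : ℂ) :
    Summable (fun k : ℕ => poch a k * poch (d - b) k / (poch c k * poch d k) *
      (-z) ^ k / Nat.factorial k * F11 (a + k) (c + k) z) ∧
    F22 a b c d z = ∑' k : ℕ, poch a k * poch (d - b) k / (poch c k * poch d k) *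
      (-z) ^ k / Nat.factorial k * F11 (a + k) (c + k) z := by
  obtain ⟨C1, hC1nn, hC1⟩ := poch_ratio_bound a c hc
  obtain ⟨C2, hC2nn, hC2⟩ := poch_ratio_bound (d-b) d hd
  set f : ℕ × ℕ → ℂ := fun p =>
    poch a p.1 * poch (d - b) p.1 / (poch c p.1 * poch d p.1) * (-z) ^ p.1 /
      (Nat.factorial p.1 : ℂ) *
      (poch (a + p.1) p.2 / poch (c + p.1) p.2 * z ^ p.2 / (Nat.factorial p.2 : ℂ)) with hf
  -- merged form of f
  have hf_eq : ∀ k n : ℕ, f (k, n) =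
      poch a (k+n) * poch (d-b) k / (poch c (k+n) * poch d k) * ((-1:ℂ)^k * z^(k+n)) /
        ((Nat.factorial k : ℂ) * (Nat.factorial n : ℂ)) := by
    intro k n
    simp only [hf]
    rw [poch_add a k n, poch_add c k n, neg_pow]
    simp only [pow_add, div_eq_mul_inv, mul_inv]
    ring
  -- norm bound
  set g : ℕ × ℕ → ℝ := fun p =>
    (C1 * C2 * ((4 * Complex.abs z) ^ p.1 / (Nat.factorial p.1 : ℝ))) *
      ((2 * Complex.abs z) ^ p.2 / (Nat.factorial p.2 : ℝ)) with hg
  have hnorm : ∀ p : ℕ × ℕ, ‖f p‖ ≤ g p := by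
    rintro ⟨k, n⟩
    rw [Complex.norm_eq_abs, hf_eq k n, map_div₀, map_mul, map_div₀, map_mul, map_mul,
      map_mul, map_pow, map_pow]
    simp only [map_mul, map_neg_eq_map, map_one, one_pow, one_mul, Complex.abs_natCast]
    have hUpos : 0 < Complex.abs (poch c (k+n)) :=
      AbsoluteValue.pos _ (poch_ne_zero hc (k+n))
    have hVpos : 0 < Complex.abs (poch d k) :=
      AbsoluteValue.pos _ (poch_ne_zero hd k)
    have hkf : (0:ℝ) < (Nat.factorial k : ℝ) := by exact_mod_cast Nat.factorial_pos k
    have hnf : (0:ℝ) < (Nat.factorial n : ℝ) := by exact_mod_cast Nat.factorial_pos n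
    have h1 : Complex.abs (poch a (k+n)) * Complex.abs (poch (d-b) k) /
        (Complex.abs (poch c (k+n)) * Complex.abs (poch d k))
        ≤ (C1 * 2^(k+n)) * (C2 * 2^k) := by
      rw [div_le_iff₀ (by positivity)]
      calc Complex.abs (poch a (k+n)) * Complex.abs (poch (d-b) k)
          ≤ (C1 * 2^(k+n) * Complex.abs (poch c (k+n))) * (C2 * 2^k * Complex.abs (poch d k)) :=
            mul_le_mul (hC1 (k+n)) (hC2 k) (AbsoluteValue.nonneg _ _) (by positivity)
        _ = (C1 * 2^(k+n)) * (C2 * 2^k) * (Complex.abs (poch c (k+n)) * Complex.abs (poch d k)) := by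
            ring
    calc Complex.abs (poch a (k+n)) * Complex.abs (poch (d-b) k) /
          (Complex.abs (poch c (k+n)) * Complex.abs (poch d k)) * Complex.abs z ^ (k+n) /
          ((Nat.factorial k : ℝ) * (Nat.factorial n : ℝ))
        ≤ (C1 * 2^(k+n)) * (C2 * 2^k) * Complex.abs z ^ (k+n) /
          ((Nat.factorial k : ℝ) * (Nat.factorial n : ℝ)) := by
          apply div_le_div_of_nonneg_right ?_ (by positivity) |>.trans_eq rfl
          exact mul_le_mul_of_nonneg_right h1 (by positivity)
      _ = g (k, n) := by
          simp only [hg]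
          rw [show (4:ℝ) = 2 * 2 by norm_num, pow_add, pow_add, mul_pow, mul_pow, mul_pow]
          field_simp
  have hgsum : Summable g := by
    rw [hg]
    exact Summable.mul_of_nonneg
      (f := fun k : ℕ => C1 * C2 * ((4 * Complex.abs z) ^ k / (Nat.factorial k : ℝ)))
      (g := fun n : ℕ => (2 * Complex.abs z) ^ n / (Nat.factorial n : ℝ))
      ((Real.summable_pow_div_factorial (4 * Complex.abs z)).mul_left (C1 * C2))
      (Real.summable_pow_div_factorial (2 * Complex.abs z))
      (fun k => mul_nonneg (mul_nonneg hC1nn hC2nn) (div_nonneg (pow_nonneg (mul_nonneg (by norm_num) (AbsoluteValue.nonneg _ _)) _) (Nat.cast_nonneg _)))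
      (fun n => div_nonneg (pow_nonneg (mul_nonneg (by norm_num) (AbsoluteValue.nonneg _ _)) _) (Nat.cast_nonneg _))
  have hsumf : Summable f := Summable.of_norm_bounded hgsum hnorm
  have hterm_eq : ∀ k : ℕ, (poch a k * poch (d - b) k / (poch c k * poch d k) *
      (-z) ^ k / Nat.factorial k * F11 (a + k) (c + k) z) = ∑' n, f (k, n) := by
    intro k
    rw [F11, ← tsum_mul_left]
  have hRHSsum : Summable (fun k : ℕ => poch a k * poch (d - b) k / (poch c k * poch d k) *
      (-z) ^ k / Nat.factorial k * F11 (a + k) (c + k) z) := by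
    rw [funext hterm_eq]
    exact hsumf.prod
  refine ⟨hRHSsum, ?_⟩
  have hdiag : ∀ N : ℕ, ∑ p ∈ Finset.HasAntidiagonal.antidiagonal N, f p
      = poch a N * poch b N / (poch c N * poch d N) * z ^ N / Nat.factorial N := by
    intro N
    rw [Finset.Nat.sum_antidiagonal_eq_sum_range_succ_mk]
    have h1 : ∀ k ∈ range (N+1), f (k, N-k) =
        (poch a N / poch c N * z^N) * ((-1:ℂ)^k * poch (d-b) k /
          (poch d k * (Nat.factorial k : ℂ) * (Nat.factorial (N-k) : ℂ))) := by
      intro k hk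
      rw [mem_range] at hk
      rw [hf_eq k (N-k), show k + (N-k) = N by omega]
      simp only [div_eq_mul_inv, mul_inv]
      ring
    rw [Finset.sum_congr rfl h1, ← Finset.mul_sum, chu_div b d hd N]
    simp only [div_eq_mul_inv, mul_inv]
    ring
  have hsig : Summable (fun σ : Σ N : ℕ, (Finset.HasAntidiagonal.antidiagonal N : Finset (ℕ × ℕ)) =>
      f (Finset.HasAntidiagonal.sigmaAntidiagonalEquivProd σ)) :=
    (Equiv.summable_iff _).mpr hsumf
  calc F22 a b c d z
      = ∑' N : ℕ, ∑ p ∈ Finset.HasAntidiagonal.antidiagonal N, f p := by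
        rw [F22]
        exact tsum_congr fun N => (hdiag N).symm
    _ = ∑' p : ℕ × ℕ, f p := by
        rw [← (Finset.HasAntidiagonal.sigmaAntidiagonalEquivProd (A := ℕ)).tsum_eq f, Summable.tsum_sigma hsig]
        exact tsum_congr fun N => (Finset.tsum_subtype _ f).symm
    _ = ∑' k : ℕ, poch a k * poch (d - b) k / (poch c k * poch d k) *
          (-z) ^ k / Nat.factorial k * F11 (a + k) (c + k) z := by
        rw [Summable.tsum_prod hsumf]
        exact (tsum_congr hterm_eq).symm
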